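/- arXiv:0807.4059 — 3 statements merged into one kernel-verified Lean document; each statement's English description precedes it below -/
import Mathlib

section
/- For every u in H^1(R^2), ∫_{R^2} |u(x)|^2 / |x| dx ≤ 2 ‖u‖_{L^2} ‖∇u‖_{L^2}. -/
open MeasureTheory Set Filter

/-- Cauchy–Schwarz for integrals. -/
lemma integral_mul_le_sqrt_mul_sqrt {α : Type*} [MeasurableSpace α] {μ : Measure α} {f g : α → ℝ}
    (hf2 : Integrable (fun x => f x ^ 2) μ) (hg2 : Integrable (fun x => g x ^ 2) μ)
    (hfg : Integrable (fun x => f x * g x) μ) :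
    ∫ x, f x * g x ∂μ ≤ Real.sqrt (∫ x, f x ^ 2 ∂μ) * Real.sqrt (∫ x, g x ^ 2 ∂μ) := by
  set A := ∫ x, f x ^ 2 ∂μ with hA
  set B := ∫ x, g x ^ 2 ∂μ with hB
  set C := ∫ x, f x * g x ∂μ with hC
  have hA0 : 0 ≤ A := integral_nonneg fun x => sq_nonneg _
  have hB0 : 0 ≤ B := integral_nonneg fun x => sq_nonneg _
  have key : ∀ t : ℝ, 0 ≤ B * (t * t) + (-2 * C) * t + A := by
    intro t
    have hint : Integrable (fun x => (f x - t * g x) ^ 2) μ := by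
      have : (fun x => (f x - t * g x) ^ 2)
          = fun x => f x ^ 2 - (2 * t) * (f x * g x) + t ^ 2 * g x ^ 2 := by
        funext x; ring
      rw [this]
      exact ((hf2.sub ((hfg.const_mul _))).add ((hg2.const_mul _)))

    have h0 : 0 ≤ ∫ x, (f x - t * g x) ^ 2 ∂μ := integral_nonneg fun x => sq_nonneg _
    have heq : ∫ x, (f x - t * g x) ^ 2 ∂μ = B * (t * t) + (-2 * C) * t + A := by
      have : (fun x => (f x - t * g x) ^ 2)
          = fun x => f x ^ 2 - (2 * t) * (f x * g x) + t ^ 2 * g x ^ 2 := by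
        funext x; ring
      have h1 : Integrable (fun x => f x ^ 2 - 2 * t * (f x * g x)) μ := by
        exact hf2.sub (hfg.const_mul (2*t))
      have h2 : Integrable (fun x => t ^ 2 * g x ^ 2) μ := hg2.const_mul _
      rw [this]
      rw [integral_add h1 h2, integral_sub hf2 (by exact hfg.const_mul (2*t)),
        integral_const_mul, integral_const_mul]
      ring
    linarith [heq ▸ h0]
  have hdisc : discrim B (-2 * C) A ≤ 0 := discrim_le_zero key
  have hCsq : C ^ 2 ≤ A * B := by
    unfold discrim at hdisc; nlinarith
  calc C ≤ |C| := le_abs_self _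
    _ = Real.sqrt (C ^ 2) := (Real.sqrt_sq_eq_abs C).symm
    _ ≤ Real.sqrt (A * B) := Real.sqrt_le_sqrt hCsq
    _ = Real.sqrt A * Real.sqrt B := Real.sqrt_mul hA0 _

/-- Derivative along rays. -/
lemma hardy_aux_deriv {u : EuclideanSpace ℝ (Fin 2) → ℂ} (hu : Differentiable ℝ u)
    (x : EuclideanSpace ℝ (Fin 2)) (t : ℝ) :
    HasDerivAt (fun s : ℝ => ‖u (s • x)‖ ^ 2)
      (2 * ((starRingEnd ℂ) (u (t • x)) * (fderiv ℝ u (t • x)) x).re) t := by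
  have hline : HasDerivAt (fun s : ℝ => s • x) x t := by
    simpa using (hasDerivAt_id t).smul_const x
  have hv : HasDerivAt (fun s : ℝ => u (s • x)) ((fderiv ℝ u (t • x)) x) t := by
    exact ((hu (t • x)).hasFDerivAt.comp_hasDerivAt t hline)
  set z := u (t • x)
  set w := (fderiv ℝ u (t • x)) x
  have hre : HasDerivAt (fun s : ℝ => (u (s • x)).re) w.re t :=
    (Complex.reCLM.hasFDerivAt.comp_hasDerivAt t hv :)
  have him : HasDerivAt (fun s : ℝ => (u (s • x)).im) w.im t :=
    (Complex.imCLM.hasFDerivAt.comp_hasDerivAt t hv :)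
  have h : HasDerivAt (fun s : ℝ => (u (s • x)).re * (u (s • x)).re
      + (u (s • x)).im * (u (s • x)).im)
      (w.re * z.re + z.re * w.re + (w.im * z.im + z.im * w.im)) t :=
    (hre.mul hre).add (him.mul him)
  have hfun : (fun s : ℝ => ‖u (s • x)‖ ^ 2)
      = fun s : ℝ => (u (s • x)).re * (u (s • x)).re + (u (s • x)).im * (u (s • x)).im := by
    funext s
    rw [← Complex.normSq_apply, ← Complex.sq_norm]
  rw [hfun]
  convert h using 1
  simp [Complex.mul_re, Complex.conj_re, Complex.conj_im]
  ring

set_option maxHeartbeats 2000000 in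
theorem hardy_type_inequality (u : EuclideanSpace ℝ (Fin 2) → ℂ)
    (hu : Differentiable ℝ u)
    (hL2 : Integrable (fun x => ‖u x‖ ^ 2))
    (hgrad : Integrable (fun x => ‖fderiv ℝ u x‖ ^ 2))
    (hint : Integrable (fun x => ‖u x‖ ^ 2 / ‖x‖)) :
    ∫ x, ‖u x‖ ^ 2 / ‖x‖
      ≤ 2 * Real.sqrt (∫ x, ‖u x‖ ^ 2) * Real.sqrt (∫ x, ‖fderiv ℝ u x‖ ^ 2) := by
  have hfr : Module.finrank ℝ (EuclideanSpace ℝ (Fin 2)) = 2 := by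
    simp [finrank_euclideanSpace]
  set H : EuclideanSpace ℝ (Fin 2) → ℝ := fun y => 2 * ((starRingEnd ℂ) (u y) * (fderiv ℝ u y) (‖y‖⁻¹ • y)).re with hHdef
  -- measurability of H
  have humeas : Measurable u := hu.continuous.measurable
  have hDmeas : Measurable (fderiv ℝ u) := measurable_fderiv ℝ u
  have happly : Measurable (fun y : EuclideanSpace ℝ (Fin 2) => (fderiv ℝ u y) (‖y‖⁻¹ • y)) := by
    have h1 : Measurable (fun y : EuclideanSpace ℝ (Fin 2) => (fderiv ℝ u y, ‖y‖⁻¹ • y)) :=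
      hDmeas.prodMk ((measurable_norm.inv).smul measurable_id)
    exact (isBoundedBilinearMap_apply.continuous.measurable).comp h1
  have hHmeas : Measurable H := by
    apply Measurable.const_mul
    exact (Complex.measurable_re).comp (((RCLike.continuous_conj.measurable).comp humeas).mul happly)
  -- pointwise bound on H
  have hHbd : ∀ y : EuclideanSpace ℝ (Fin 2), |H y| ≤ 2 * (‖u y‖ * ‖fderiv ℝ u y‖) := by
    intro y
    have h1 : |((starRingEnd ℂ) (u y) * (fderiv ℝ u y) (‖y‖⁻¹ • y)).re|
        ≤ ‖u y‖ * ‖(fderiv ℝ u y) (‖y‖⁻¹ • y)‖ := by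
      calc |((starRingEnd ℂ) (u y) * (fderiv ℝ u y) (‖y‖⁻¹ • y)).re|
          ≤ ‖(starRingEnd ℂ) (u y) * (fderiv ℝ u y) (‖y‖⁻¹ • y)‖ := Complex.abs_re_le_norm _
        _ = ‖u y‖ * ‖(fderiv ℝ u y) (‖y‖⁻¹ • y)‖ := by
            rw [norm_mul, RCLike.norm_conj]
    have h2 : ‖(fderiv ℝ u y) (‖y‖⁻¹ • y)‖ ≤ ‖fderiv ℝ u y‖ := by
      calc ‖(fderiv ℝ u y) (‖y‖⁻¹ • y)‖ ≤ ‖fderiv ℝ u y‖ * ‖‖y‖⁻¹ • y‖ :=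
            (fderiv ℝ u y).le_opNorm _
        _ ≤ ‖fderiv ℝ u y‖ * 1 := by
            apply mul_le_mul_of_nonneg_left _ (norm_nonneg _)
            rcases eq_or_ne y 0 with rfl | hy
            · simp
            · rw [norm_smul, norm_inv, norm_norm, inv_mul_cancel₀ (norm_ne_zero_iff.2 hy)]
        _ = ‖fderiv ℝ u y‖ := mul_one _
    rw [hHdef]
    simp only [abs_mul, abs_two]
    have := mul_le_mul_of_nonneg_left (h1.trans
      (mul_le_mul_of_nonneg_left h2 (norm_nonneg _))) (by norm_num : (0:ℝ) ≤ 2)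
    simpa using this
  -- integrability of ‖u‖ ‖Du‖
  have hmemu : MemLp (fun y : EuclideanSpace ℝ (Fin 2) => ‖u y‖) 2 volume :=
    (memLp_two_iff_integrable_sq (humeas.norm.aestronglyMeasurable)).mpr hL2
  have hmemD : MemLp (fun y : EuclideanSpace ℝ (Fin 2) => ‖fderiv ℝ u y‖) 2 volume :=
    (memLp_two_iff_integrable_sq (hDmeas.norm.aestronglyMeasurable)).mpr hgrad
  have hmul : Integrable (fun y : EuclideanSpace ℝ (Fin 2) => ‖u y‖ * ‖fderiv ℝ u y‖) := by
    rw [← memLp_one_iff_integrable]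
    exact MemLp.smul hmemD hmemu (hpqr := ⟨by simp [ENNReal.inv_two_add_inv_two]⟩)
  have hHint : Integrable H := by
    apply (hmul.const_mul 2).mono' hHmeas.aestronglyMeasurable
    filter_upwards with y
    simpa [Real.norm_eq_abs] using hHbd y
  -- scaling of integrals
  have hscale : ∀ (f : EuclideanSpace ℝ (Fin 2) → ℝ) (t : ℝ), 0 < t →
      ∫ x, f (t • x) = (t ^ 2)⁻¹ * ∫ x, f x := by
    intro f t ht
    rw [Measure.integral_comp_smul volume f t, hfr, smul_eq_mul,
      abs_of_nonneg (by positivity)]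
  have hrw2 : ∀ t : ℝ, 0 < t → t ^ (-2:ℝ) = (t ^ 2)⁻¹ := by
    intro t ht
    rw [Real.rpow_neg ht.le, show ((2:ℝ)) = ((2:ℕ):ℝ) by norm_num, Real.rpow_natCast]
  have hrw3 : ∀ t : ℝ, 0 < t → t ^ (-3:ℝ) = t⁻¹ * ((t ^ 2)⁻¹) := by
    intro t ht
    rw [Real.rpow_neg ht.le, show ((3:ℝ)) = ((3:ℕ):ℝ) by norm_num, Real.rpow_natCast,
      ← mul_inv]
    congr 1
    ring
  -- integrability on the product space
  have hFmeas : AEStronglyMeasurable (fun p : (EuclideanSpace ℝ (Fin 2)) × ℝ => H (p.2 • p.1))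
      (volume.prod (volume.restrict (Set.Ioi (1:ℝ)))) :=
    (hHmeas.comp (continuous_snd.smul continuous_fst).measurable).aestronglyMeasurable
  have hFint : Integrable (fun p : (EuclideanSpace ℝ (Fin 2)) × ℝ => H (p.2 • p.1))
      (volume.prod (volume.restrict (Set.Ioi (1:ℝ)))) := by
    rw [integrable_prod_iff' hFmeas]
    constructor
    · filter_upwards [ae_restrict_mem measurableSet_Ioi] with t ht
      exact hHint.comp_smul (ne_of_gt (lt_trans one_pos ht))
    · have hC : IntegrableOn (fun t : ℝ => (t ^ 2)⁻¹ * ∫ x, ‖H x‖) (Set.Ioi 1) := by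
        apply Integrable.mul_const
        exact ((integrableOn_Ioi_rpow_of_lt (by norm_num) one_pos).congr_fun
          (fun t ht => hrw2 t (lt_trans one_pos ht)) measurableSet_Ioi)
      apply hC.congr
      filter_upwards [ae_restrict_mem measurableSet_Ioi] with t ht
      exact (hscale (fun x => ‖H x‖) t (lt_trans one_pos ht)).symm
  have hGmeas : AEStronglyMeasurable
      (fun p : (EuclideanSpace ℝ (Fin 2)) × ℝ => ‖u (p.2 • p.1)‖ ^ 2 * p.2⁻¹)
      (volume.prod (volume.restrict (Set.Ioi (1:ℝ)))) := by
    apply Measurable.aestronglyMeasurable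
    exact (((humeas.comp (continuous_snd.smul continuous_fst).measurable).norm.pow_const 2).mul
      measurable_snd.inv)
  have hGint : Integrable (fun p : (EuclideanSpace ℝ (Fin 2)) × ℝ => ‖u (p.2 • p.1)‖ ^ 2 * p.2⁻¹)
      (volume.prod (volume.restrict (Set.Ioi (1:ℝ)))) := by
    rw [integrable_prod_iff' hGmeas]
    constructor
    · filter_upwards [ae_restrict_mem measurableSet_Ioi] with t ht
      exact (hL2.comp_smul (ne_of_gt (lt_trans one_pos ht))).mul_const _
    · have hC : IntegrableOn (fun t : ℝ => t⁻¹ * ((t ^ 2)⁻¹ * ∫ x, ‖u x‖ ^ 2)) (Set.Ioi 1) := by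
        have h1 : IntegrableOn (fun t : ℝ => t⁻¹ * (t ^ 2)⁻¹) (Set.Ioi 1) :=
          ((integrableOn_Ioi_rpow_of_lt (by norm_num) one_pos).congr_fun
            (fun t ht => hrw3 t (lt_trans one_pos ht)) measurableSet_Ioi)
        have := h1.mul_const (∫ x, ‖u x‖ ^ 2)
        apply this.congr
        filter_upwards with t
        ring
      apply hC.congr
      filter_upwards [ae_restrict_mem measurableSet_Ioi] with t ht
      have htpos : (0:ℝ) < t := lt_trans one_pos ht
      have heq : ∀ x : EuclideanSpace ℝ (Fin 2),
          ‖‖u (t • x)‖ ^ 2 * t⁻¹‖ = ‖u (t • x)‖ ^ 2 * t⁻¹ := by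
        intro x
        rw [Real.norm_eq_abs, abs_of_nonneg (by positivity)]
      rw [show (fun x : EuclideanSpace ℝ (Fin 2) => ‖‖u (t • x)‖ ^ 2 * t⁻¹‖)
          = fun x => ‖u (t • x)‖ ^ 2 * t⁻¹ from funext heq] at *
      rw [integral_mul_const, hscale (fun x => ‖u x‖ ^ 2) t htpos]
      ring
  -- a.e. slice facts
  have h1 := hFint.prod_right_ae
  have h2 := hGint.prod_right_ae
  have h3 : ∀ᵐ x : EuclideanSpace ℝ (Fin 2), x ≠ 0 := by
    have h0 : volume ({(0 : EuclideanSpace ℝ (Fin 2))} : Set (EuclideanSpace ℝ (Fin 2))) = 0 :=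
      measure_singleton _
    rw [ae_iff]
    convert h0 using 2
    simp [Set.ext_iff]
  -- the key pointwise identity
  have hae : ∀ᵐ x : EuclideanSpace ℝ (Fin 2),
      ‖u x‖ ^ 2 / ‖x‖ = ∫ t in Set.Ioi (1:ℝ), -H (t • x) := by
    filter_upwards [h1, h2, h3] with x hx1 hx2 hxne
    have hx1' : IntegrableOn (fun t => H (t • x)) (Set.Ioi (1:ℝ)) volume := hx1
    have hx2' : IntegrableOn (fun t => ‖u (t • x)‖ ^ 2 * t⁻¹) (Set.Ioi (1:ℝ)) volume := hx2
    have hxn : ‖x‖ ≠ 0 := norm_ne_zero_iff.2 hxne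
    have hxnpos : 0 < ‖x‖ := norm_pos_iff.2 hxne
    have hkey : ∀ t : ℝ, 0 < t →
        ‖x‖ * H (t • x) = 2 * ((starRingEnd ℂ) (u (t • x)) * (fderiv ℝ u (t • x)) x).re := by
      intro t ht
      have hdir : ‖t • x‖⁻¹ • (t • x) = ‖x‖⁻¹ • x := by
        rw [norm_smul, Real.norm_eq_abs, abs_of_pos ht, smul_smul]
        congr 1
        field_simp
      simp only [hHdef]
      rw [hdir, ContinuousLinearMap.map_smul]
      rw [show (starRingEnd ℂ) (u (t • x)) * (‖x‖⁻¹ • (fderiv ℝ u (t • x)) x)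
          = (‖x‖⁻¹ : ℝ) * ((starRingEnd ℂ) (u (t • x)) * (fderiv ℝ u (t • x)) x) by
        rw [Complex.real_smul]; ring]
      rw [Complex.re_ofReal_mul]
      field_simp
    set I := ∫ t in Set.Ioi (1:ℝ), H (t • x) with hI
    -- FTC on [1, T]
    have hA : ∀ T : ℝ, 1 ≤ T →
        ‖u (T • x)‖ ^ 2 = ‖u x‖ ^ 2 + ‖x‖ * ∫ t in (1:ℝ)..T, H (t • x) := by
      intro T hT
      have hderiv : ∀ t ∈ Set.uIcc (1:ℝ) T,
          HasDerivAt (fun s : ℝ => ‖u (s • x)‖ ^ 2) (‖x‖ * H (t • x)) t := by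
        intro t htmem
        rw [Set.uIcc_of_le hT] at htmem
        have htpos : 0 < t := lt_of_lt_of_le one_pos htmem.1
        rw [hkey t htpos]
        exact hardy_aux_deriv hu x t
      have hii : IntervalIntegrable (fun t => ‖x‖ * H (t • x)) volume 1 T := by
        rw [intervalIntegrable_iff, Set.uIoc_of_le hT]
        exact Integrable.const_mul
          (hx1'.mono_set (Set.Ioc_subset_Ioi_self : Set.Ioc (1:ℝ) T ⊆ Set.Ioi 1)) ‖x‖
      have := intervalIntegral.integral_eq_sub_of_hasDerivAt hderiv hii
      rw [intervalIntegral.integral_const_mul] at this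
      have h1s : ‖u ((1:ℝ) • x)‖ ^ 2 = ‖u x‖ ^ 2 := by rw [one_smul]
      linarith [this, h1s]
    have hB : Filter.Tendsto (fun T : ℝ => ∫ t in (1:ℝ)..T, H (t • x))
        Filter.atTop (nhds I) :=
      intervalIntegral_tendsto_integral_Ioi 1 hx1' Filter.tendsto_id
    have hL : Filter.Tendsto (fun T : ℝ => ‖u (T • x)‖ ^ 2) Filter.atTop
        (nhds (‖u x‖ ^ 2 + ‖x‖ * I)) := by
      apply Filter.Tendsto.congr' _ ((hB.const_mul ‖x‖).const_add (‖u x‖ ^ 2))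
      filter_upwards [Filter.eventually_ge_atTop 1] with T hT
      exact (hA T hT).symm
    -- the limit must be zero
    have hL0 : ‖u x‖ ^ 2 + ‖x‖ * I = 0 := by
      by_contra hne
      have hLnn : 0 ≤ ‖u x‖ ^ 2 + ‖x‖ * I :=
        ge_of_tendsto' hL fun T => sq_nonneg _
      have hLpos : 0 < ‖u x‖ ^ 2 + ‖x‖ * I := hLnn.lt_of_ne (Ne.symm hne)
      set L := ‖u x‖ ^ 2 + ‖x‖ * I with hLdef
      have hev : ∀ᶠ T in Filter.atTop, L / 2 ≤ ‖u (T • x)‖ ^ 2 :=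
        hL.eventually (eventually_ge_nhds (by linarith))
      obtain ⟨T₁, hT₁⟩ := Filter.eventually_atTop.mp hev
      set T₂ := max T₁ 2 with hT₂
      have hT₂2 : (2:ℝ) ≤ T₂ := le_max_right _ _
      have hT₂pos : (0:ℝ) < T₂ := lt_of_lt_of_le two_pos hT₂2
      have hT₂1 : (1:ℝ) ≤ T₂ := by linarith
      have hsub : IntegrableOn (fun t => ‖u (t • x)‖ ^ 2 * t⁻¹) (Set.Ioi T₂) :=
        hx2'.mono_set (Set.Ioi_subset_Ioi hT₂1)
      have hbound : IntegrableOn (fun t => L / 2 * t⁻¹) (Set.Ioi T₂) := by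
        apply hsub.mono' ((measurable_const.mul measurable_inv).aestronglyMeasurable)
        filter_upwards [ae_restrict_mem measurableSet_Ioi] with t ht
        have htpos : 0 < t := lt_of_le_of_lt hT₂pos.le ht
        simp only [Pi.mul_apply]
        rw [Real.norm_eq_abs, abs_mul, abs_of_nonneg (by linarith : (0:ℝ) ≤ L / 2),
          abs_of_nonneg (inv_nonneg.2 htpos.le)]
        exact mul_le_mul_of_nonneg_right (hT₁ t ((le_max_left _ _).trans ht.le))
          (inv_nonneg.2 htpos.le)
      have hninv : ¬ IntegrableOn (fun t : ℝ => t⁻¹) (Set.Ioi T₂) := by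
        intro h
        have h2 : IntegrableOn (fun t : ℝ => t ^ (-1:ℝ)) (Set.Ioi T₂) :=
          h.congr_fun (fun t ht => (Real.rpow_neg_one t).symm) measurableSet_Ioi
        rw [integrableOn_Ioi_rpow_iff hT₂pos] at h2
        norm_num at h2
      apply hninv
      have h5 := hbound.const_mul (2 / L)
      apply h5.congr
      filter_upwards with t
      field_simp
    -- conclude
    rw [integral_neg, div_eq_iff hxn]
    linarith [hL0]
  have hswap : ∫ x, ‖u x‖ ^ 2 / ‖x‖
      = ∫ t in Set.Ioi (1:ℝ), ∫ x, -H (t • x) := by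
    rw [integral_congr_ae hae]
    exact integral_integral_swap (f := fun x t => -H (t • x)) (by exact hFint.neg)
  have h6 : ∫ t in Set.Ioi (1:ℝ), ∫ x, -H (t • x)
      = ∫ t in Set.Ioi (1:ℝ), (t ^ 2)⁻¹ * ∫ x, -H x := by
    apply integral_congr_ae
    filter_upwards [ae_restrict_mem measurableSet_Ioi] with t ht
    exact hscale (fun y => -H y) t (lt_trans one_pos ht)
  have h7 : ∫ t in Set.Ioi (1:ℝ), (t ^ 2)⁻¹ = 1 := by
    rw [← setIntegral_congr_fun measurableSet_Ioi
      (fun t ht => hrw2 t (lt_trans one_pos ht))]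
    rw [integral_Ioi_rpow_of_lt (by norm_num) one_pos]
    norm_num
  have hred : ∫ t in Set.Ioi (1:ℝ), ∫ x, -H (t • x) = ∫ x, -H x := by
    rw [h6, integral_mul_const, h7, one_mul]
  rw [hswap, hred]
  have hle : ∫ x, -H x ≤ ∫ x, 2 * (‖u x‖ * ‖fderiv ℝ u x‖) := by
    apply integral_mono hHint.neg (hmul.const_mul 2)
    intro y
    exact (neg_le_abs (H y)).trans (hHbd y)
  calc ∫ x, -H x ≤ ∫ x, 2 * (‖u x‖ * ‖fderiv ℝ u x‖) := hle
    _ = 2 * ∫ x, ‖u x‖ * ‖fderiv ℝ u x‖ := integral_const_mul 2 _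
    _ ≤ 2 * (Real.sqrt (∫ x, ‖u x‖ ^ 2) * Real.sqrt (∫ x, ‖fderiv ℝ u x‖ ^ 2)) := by
        have := integral_mul_le_sqrt_mul_sqrt hL2 hgrad hmul
        linarith
    _ = 2 * Real.sqrt (∫ x, ‖u x‖ ^ 2) * Real.sqrt (∫ x, ‖fderiv ℝ u x‖ ^ 2) :=
        (mul_assoc _ _ _).symm
end

section
/- Let (u, W) solve u'' + u'/r − (m^2/r^2)u = (W−1)u on (0,∞) with u ≥ 0, u not identically zero, u → 0 at infinity, W ≥ 0, and set f(r) = r^{−m} u(r). Then f satisfies f'' + ((2m+1)/r) f' = (W−1) f, and f > 0 with f' < 0 on (0,∞). -/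
open Filter Set

theorem reduced_function_positive_decreasing (m : ℕ) (hm : 0 < m)
    (u W : ℝ → ℝ) (c : ℝ)
    (hu : ContDiffOn ℝ 2 u (Set.Ioi 0))
    (hW : ContinuousOn W (Set.Ici 0))
    (hode : ∀ r > (0 : ℝ),
      deriv (deriv u) r + deriv u r / r - (m : ℝ) ^ 2 / r ^ 2 * u r
        = (W r - 1) * u r)
    (hu0 : ∀ r > (0 : ℝ), 0 ≤ u r)
    (hune : ∃ r > (0 : ℝ), u r ≠ 0)
    (hulim : Tendsto u atTop (nhds 0))
    (hW0 : W 0 = 0) (hWnonneg : ∀ r, 0 ≤ W r) (hWmono : MonotoneOn W (Set.Ici 0))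
    (hf0 : Tendsto (fun r => u r / r ^ m) (nhdsWithin 0 (Set.Ioi 0)) (nhds c))
    (hc : 0 < c)
    (hf'0 : Tendsto (deriv fun r => u r / r ^ m)
      (nhdsWithin 0 (Set.Ioi 0)) (nhds 0)) :
    ∀ r > (0 : ℝ),
      (deriv (deriv fun s => u s / s ^ m) r
          + (2 * (m : ℝ) + 1) / r * deriv (fun s => u s / s ^ m) r
        = (W r - 1) * (u r / r ^ m)) ∧
      0 < u r / r ^ m ∧ deriv (fun s => u s / s ^ m) r < 0 := by
  obtain ⟨k, rfl⟩ : ∃ k, m = k + 1 := ⟨m - 1, (Nat.succ_pred_eq_of_pos hm).symm⟩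
  set f : ℝ → ℝ := fun s => u s / s ^ (k + 1) with hfdef
  -- differentiability of u and deriv u
  have huD : DifferentiableOn ℝ u (Ioi 0) := hu.differentiableOn two_ne_zero
  have hu'C : ContDiffOn ℝ 1 (deriv u) (Ioi 0) :=
    hu.deriv_of_isOpen isOpen_Ioi (by norm_num)
  have hu'D : DifferentiableOn ℝ (deriv u) (Ioi 0) := hu'C.differentiableOn one_ne_zero
  have hud : ∀ r ∈ Ioi (0 : ℝ), HasDerivAt u (deriv u r) r := fun r hr =>
    ((huD r hr).differentiableAt (isOpen_Ioi.mem_nhds hr)).hasDerivAt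
  have hu'd : ∀ r ∈ Ioi (0 : ℝ), HasDerivAt (deriv u) (deriv (deriv u) r) r := fun r hr =>
    ((hu'D r hr).differentiableAt (isOpen_Ioi.mem_nhds hr)).hasDerivAt
  set A : ℝ → ℝ := fun r => deriv u r / r ^ (k + 1) - ((k : ℝ) + 1) * u r / r ^ (k + 2)
    with hAdef
  have hfA : ∀ r ∈ Ioi (0 : ℝ), HasDerivAt f (A r) r := by
    intro r hr
    have hr0 : (0 : ℝ) < r := hr
    have h1 : HasDerivAt (fun s : ℝ => s ^ (k + 1)) (((k : ℝ) + 1) * r ^ k) r := by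
      simpa using hasDerivAt_pow (k + 1) r
    have h2 := (hud r hr).div h1 (by positivity)
    refine h2.congr_deriv ?_
    simp only [hAdef]
    field_simp
    ring
  have hderivf : ∀ r ∈ Ioi (0 : ℝ), deriv f r = A r := fun r hr => (hfA r hr).deriv
  set B : ℝ → ℝ := fun r => (W r - 1) * f r - (2 * (k : ℝ) + 3) / r * A r with hBdef
  have hAB : ∀ r ∈ Ioi (0 : ℝ), HasDerivAt A (B r) r := by
    intro r hr
    have hr0 : (0 : ℝ) < r := hr
    have h1 : HasDerivAt (fun s : ℝ => s ^ (k + 1)) (((k : ℝ) + 1) * r ^ k) r := by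
      simpa using hasDerivAt_pow (k + 1) r
    have h2 : HasDerivAt (fun s : ℝ => s ^ (k + 2)) (((k : ℝ) + 2) * r ^ (k + 1)) r := by
      simpa using hasDerivAt_pow (k + 2) r
    have hq1 := (hu'd r hr).div h1 (by positivity)
    have hq2 := (((hud r hr).const_mul ((k : ℝ) + 1)).div h2 (by positivity))
    have h3 := hq1.sub hq2
    refine h3.congr_deriv ?_
    have hode' : deriv (deriv u) r
        = (W r - 1) * u r - deriv u r / r + ((k : ℝ) + 1) ^ 2 / r ^ 2 * u r := by
      have := hode r hr0
      push_cast at this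
      linarith
    simp only [hBdef, hAdef, hfdef]
    rw [hode']
    field_simp
    ring
  have hf'B : ∀ r ∈ Ioi (0 : ℝ), HasDerivAt (deriv f) (B r) r := by
    intro r hr
    exact (hAB r hr).congr_of_eventuallyEq
      (Filter.eventuallyEq_of_mem (isOpen_Ioi.mem_nhds hr) hderivf)
  -- nonnegativity of f
  have hfnn : ∀ r ∈ Ioi (0 : ℝ), 0 ≤ f r := fun r hr =>
    div_nonneg (hu0 r hr) (pow_nonneg (le_of_lt hr) _)
  -- H = r^(2k+3) * f'
  set H : ℝ → ℝ := fun r => r ^ (2 * k + 3) * deriv f r with hHdef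
  have hHd : ∀ r ∈ Ioi (0 : ℝ),
      HasDerivAt H (r ^ (2 * k + 3) * ((W r - 1) * f r)) r := by
    intro r hr
    have hr0 : (0 : ℝ) < r := hr
    have h1 : HasDerivAt (fun s : ℝ => s ^ (2 * k + 3))
        ((2 * (k : ℝ) + 3) * r ^ (2 * k + 2)) r := by
      simpa using hasDerivAt_pow (2 * k + 3) r
    have h2 := h1.mul (hf'B r hr)
    refine h2.congr_deriv ?_
    rw [hderivf r hr]
    simp only [hBdef]
    field_simp
    ring
  -- limits
  have hH0 : Tendsto H (nhdsWithin 0 (Ioi 0)) (nhds 0) := by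
    have h1 : Tendsto (fun r : ℝ => r ^ (2 * k + 3)) (nhdsWithin 0 (Ioi 0)) (nhds 0) := by
      apply tendsto_nhdsWithin_of_tendsto_nhds
      simpa using (continuous_pow (2 * k + 3)).tendsto (0 : ℝ)
    simpa using h1.mul hf'0
  have hftop : Tendsto f atTop (nhds 0) := by
    apply tendsto_of_tendsto_of_tendsto_of_le_of_le' tendsto_const_nhds hulim
    · filter_upwards [eventually_gt_atTop (0 : ℝ)] with r hr
      exact hfnn r hr
    · filter_upwards [eventually_ge_atTop (1 : ℝ)] with r hr
      exact div_le_self (hu0 r (by linarith)) (one_le_pow₀ hr)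
  -- positivity of f via ODE uniqueness (Gronwall)
  have hfpos : ∀ r ∈ Ioi (0 : ℝ), 0 < f r := by
    by_contra hcon
    push_neg at hcon
    obtain ⟨r0, hr0, hle⟩ := hcon
    have hr00 : (0 : ℝ) < r0 := hr0
    have hf0r : f r0 = 0 := le_antisymm hle (hfnn r0 hr0)
    have hf'0r : deriv f r0 = 0 := by
      apply IsLocalMin.deriv_eq_zero
      have hev : ∀ᶠ s in nhds r0, f r0 ≤ f s := by
        filter_upwards [isOpen_Ioi.mem_nhds hr0] with s hs
        rw [hf0r]; exact hfnn s hs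
      exact hev
    have key : ∀ a ∈ Ioo (0 : ℝ) r0, f a = 0 := by
      intro a ha
      obtain ⟨ha0, har0⟩ := ha
      set C : ℝ := (2 * (k : ℝ) + 3) / a + W r0 + 1 with hCdef
      have hWr0 : (0 : ℝ) ≤ W r0 := hWnonneg r0
      have hda : (0 : ℝ) < (2 * (k : ℝ) + 3) / a := by positivity
      have hC0 : (0 : ℝ) ≤ C := by rw [hCdef]; linarith
      have hC1 : (1 : ℝ) ≤ C := by rw [hCdef]; linarith
      set v : ℝ → ℝ × ℝ → ℝ × ℝ := fun t p =>
        (p.2, -((2 * (k : ℝ) + 3) / max t a) * p.2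
          + (W (min (max t a) r0) - 1) * p.1) with hvdef
      have hlip : ∀ t, LipschitzOnWith C.toNNReal (v t) univ := by
        intro t
        apply LipschitzWith.lipschitzOnWith
        apply LipschitzWith.of_dist_le_mul
        intro p q
        have hma : a ≤ max t a := le_max_right _ _
        have hma0 : (0 : ℝ) < max t a := lt_of_lt_of_le ha0 hma
        have hc1 : |(2 * (k : ℝ) + 3) / max t a| ≤ (2 * (k : ℝ) + 3) / a := by
          rw [abs_of_nonneg (by positivity)]
          gcongr
        have hcl0 : (0 : ℝ) ≤ min (max t a) r0 := le_min hma0.le hr00.le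
        have hW1 : W (min (max t a) r0) ≤ W r0 :=
          hWmono hcl0 hr00.le (min_le_right _ _)
        have hW2 : 0 ≤ W (min (max t a) r0) := hWnonneg _
        have hc2 : |W (min (max t a) r0) - 1| ≤ W r0 + 1 := by
          rw [abs_le]; constructor <;> linarith
        rw [Real.coe_toNNReal _ hC0, Prod.dist_eq, Prod.dist_eq]
        simp only [hvdef]
        simp only [Real.dist_eq]
        have hM0 : (0 : ℝ) ≤ max |p.1 - q.1| |p.2 - q.2| :=
          le_trans (abs_nonneg _) (le_max_left _ _)
        apply max_le
        · exact le_trans (le_max_right |p.1 - q.1| _)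
            (le_mul_of_one_le_left hM0 hC1)
        · have hrw : (-((2 * (k : ℝ) + 3) / max t a) * p.2
              + (W (min (max t a) r0) - 1) * p.1)
              - (-((2 * (k : ℝ) + 3) / max t a) * q.2
              + (W (min (max t a) r0) - 1) * q.1)
              = -(((2 * (k : ℝ) + 3) / max t a) * (p.2 - q.2))
                + (W (min (max t a) r0) - 1) * (p.1 - q.1) := by ring
          rw [hrw]
          calc |_ + _| ≤ |(2 * (k : ℝ) + 3) / max t a| * |p.2 - q.2|
                + |W (min (max t a) r0) - 1| * |p.1 - q.1| := by
                refine le_trans (abs_add_le _ _) ?_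
                rw [abs_neg, abs_mul, abs_mul]
            _ ≤ (2 * (k : ℝ) + 3) / a * max |p.1 - q.1| |p.2 - q.2|
                + (W r0 + 1) * max |p.1 - q.1| |p.2 - q.2| :=
                add_le_add
                  (mul_le_mul hc1 (le_max_right _ _) (abs_nonneg _) hda.le)
                  (mul_le_mul hc2 (le_max_left _ _) (abs_nonneg _) (by linarith))
            _ = C * max |p.1 - q.1| |p.2 - q.2| := by rw [hCdef]; ring
      have hcontY : ContinuousOn (fun t => (f t, deriv f t)) (Icc a r0) := by
        intro t ht
        have ht0 : (0 : ℝ) < t := lt_of_lt_of_le ha0 ht.1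
        exact (((hfA t ht0).differentiableAt.continuousAt).prodMk
          ((hf'B t ht0).differentiableAt.continuousAt)).continuousWithinAt
      have hderivY : ∀ t ∈ Ioc a r0, HasDerivWithinAt (fun t => (f t, deriv f t))
          (v t (f t, deriv f t)) (Iic t) t := by
        intro t ht
        have ht0 : (0 : ℝ) < t := lt_trans ha0 ht.1
        have h1 : HasDerivAt (fun t => (f t, deriv f t)) (A t, B t) t :=
          (hfA t ht0).prodMk (hf'B t ht0)
        have h2 : v t (f t, deriv f t) = (A t, B t) := by
          simp only [hvdef, Prod.mk.injEq]
          rw [max_eq_left ht.1.le, min_eq_left ht.2, hderivf t ht0]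
          constructor
          · rfl
          · simp only [hBdef]; ring
        rw [h2]
        exact h1.hasDerivWithinAt
      have hg' : ∀ t ∈ Ioc a r0, HasDerivWithinAt (fun _ : ℝ => ((0 : ℝ), (0 : ℝ)))
          (v t ((0 : ℝ), (0 : ℝ))) (Iic t) t := by
        intro t ht
        have h0 : v t ((0 : ℝ), (0 : ℝ)) = ((0 : ℝ), (0 : ℝ)) := by
          simp [hvdef]
        rw [h0]
        exact (hasDerivAt_const t _).hasDerivWithinAt
      have heq := ODE_solution_unique_of_mem_Icc_left (fun t _ => hlip t) hcontY hderivY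
        (fun t _ => mem_univ _) continuousOn_const hg' (fun t _ => mem_univ _)
        (by simp [Prod.ext_iff, hf0r, hf'0r])
      have hfa := heq (left_mem_Icc.mpr har0.le)
      exact (Prod.ext_iff.mp hfa).1
    have htend : Tendsto f (nhdsWithin 0 (Ioi 0)) (nhds 0) := by
      refine Tendsto.congr' ?_ tendsto_const_nhds
      filter_upwards [Ioo_mem_nhdsGT_of_mem (show (0:ℝ) ∈ Ico (0:ℝ) r0 from ⟨le_rfl, hr00⟩)]
        with s hs
      exact (key s hs).symm
    have hc0 : c = 0 := tendsto_nhds_unique hf0 htend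
    linarith
  -- f' < 0
  have claim1 : ∀ r ∈ Ioi (0 : ℝ), W r < 1 → H r < 0 := by
    intro r hr hWr
    have hr0 : (0 : ℝ) < r := hr
    have hanti : StrictAntiOn H (Ioc 0 r) := by
      apply strictAntiOn_of_deriv_neg (convex_Ioc 0 r)
      · intro s hs
        exact ((hHd s hs.1).differentiableAt.continuousAt).continuousWithinAt
      · intro s hs
        rw [interior_Ioc] at hs
        rw [(hHd s hs.1).deriv]
        have hWs : W s ≤ W r := hWmono (le_of_lt hs.1) (le_of_lt hr0) hs.2.le
        have hfs := hfpos s hs.1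
        nlinarith [mul_pos (pow_pos hs.1 (2 * k + 3))
          (mul_pos (show (0:ℝ) < 1 - W s by linarith) hfs)]
    have h2 : H (r / 2) ≤ 0 := by
      apply ge_of_tendsto hH0
      filter_upwards [Ioo_mem_nhdsGT_of_mem ⟨le_rfl, half_pos hr0⟩] with s hs
      exact (hanti ⟨hs.1, by linarith [hs.2]⟩
        ⟨half_pos hr0, half_le_self hr0.le⟩ hs.2).le
    have h3 : H r < H (r / 2) :=
      hanti ⟨half_pos hr0, half_le_self hr0.le⟩ ⟨hr0, le_rfl⟩ (half_lt_self hr0)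
    linarith
  have hHneg : ∀ r ∈ Ioi (0 : ℝ), H r < 0 := by
    intro r0 hr0
    by_contra hcon
    push_neg at hcon
    have hW1 : 1 ≤ W r0 := by
      by_contra h
      push_neg at h
      exact absurd (claim1 r0 hr0 h) (by linarith)
    have hr00 : (0 : ℝ) < r0 := hr0
    have hWge : ∀ s ∈ Ioi r0, 1 ≤ W s := fun s hs =>
      le_trans hW1 (hWmono hr00.le (le_of_lt (lt_trans hr00 hs)) (le_of_lt hs))
    have hHmono : MonotoneOn H (Ici r0) := by
      apply monotoneOn_of_deriv_nonneg (convex_Ici r0)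
      · intro s hs
        have hs0 : (0 : ℝ) < s := lt_of_lt_of_le hr00 hs
        exact ((hHd s hs0).differentiableAt.continuousAt).continuousWithinAt
      · intro s hs
        rw [interior_Ici] at hs
        have hs0 : (0 : ℝ) < s := lt_trans hr00 hs
        exact ((hHd s hs0).differentiableAt).differentiableWithinAt
      · intro s hs
        rw [interior_Ici] at hs
        have hs0 : (0 : ℝ) < s := lt_trans hr00 hs
        rw [(hHd s hs0).deriv]
        have := hWge s hs
        have := hfnn s hs0
        exact mul_nonneg (by positivity) (mul_nonneg (by linarith) (hfnn s hs0))
    have hfmono : MonotoneOn f (Ici r0) := by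
      apply monotoneOn_of_deriv_nonneg (convex_Ici r0)
      · intro s hs
        have hs0 : (0 : ℝ) < s := lt_of_lt_of_le hr00 hs
        exact ((hfA s hs0).differentiableAt.continuousAt).continuousWithinAt
      · intro s hs
        rw [interior_Ici] at hs
        have hs0 : (0 : ℝ) < s := lt_trans hr00 hs
        exact (hfA s hs0).differentiableAt.differentiableWithinAt
      · intro s hs
        rw [interior_Ici] at hs
        have hs0 : (0 : ℝ) < s := lt_trans hr00 hs
        have hHs : 0 ≤ H s := le_trans hcon (hHmono self_mem_Ici (Set.mem_Ici.mpr (le_of_lt (Set.mem_Ioi.mp hs))) (le_of_lt (Set.mem_Ioi.mp hs)))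
        have hHs' : H s = s ^ (2 * k + 3) * deriv f s := rfl
        rw [hHs'] at hHs
        nlinarith [pow_pos hs0 (2 * k + 3)]
    have hle : f r0 ≤ 0 := by
      apply ge_of_tendsto hftop
      filter_upwards [eventually_ge_atTop r0] with s hs
      exact hfmono self_mem_Ici hs hs
    exact absurd (hfpos r0 hr0) (by linarith)
  -- conclusion
  intro r hr
  refine ⟨?_, hfpos r hr, ?_⟩
  · rw [(hf'B r hr).deriv, hderivf r hr]
    simp only [hBdef]
    push_cast
    ring
  · have := hHneg r hr
    simp only [hHdef] at this
    nlinarith [pow_pos (show (0 : ℝ) < r from hr) (2 * k + 3)]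
end

section
/- Suppose that for every γ > 0 and every u ∈ X with ∫|u|^2 = λ one has T(u) + (γ/2)V(u) ≥ e_0(λ) := (γλ^2/16π)(1 + 8π(1+I)/N − 2 ln(γλ/N)), where N, I > 0 are fixed constants. Then −V(u) ≤ (λ^2/4π) ln(8π T(u)/(Nλ)) − ((I+1)/N − 1/(8π)) λ^2. -/
/-- Optimizing the ground-state energy bound over the coupling `γ` yields the
sharp logarithmic Hardy–Littlewood–Sobolev-type inequality. -/
theorem log_HLS_from_energy_bound (T V lam N I : ℝ)
    (hT : 0 < T) (hlam : 0 < lam) (hN : 0 < N) (hI : 0 < I)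
    (hbound : ∀ γ > (0 : ℝ), T + (γ / 2) * V ≥
      (γ * lam ^ 2 / (16 * Real.pi)) *
        (1 + 8 * Real.pi * (1 + I) / N - 2 * Real.log (γ * lam / N))) :
    -V ≤ (lam ^ 2 / (4 * Real.pi)) * Real.log (8 * Real.pi * T / (N * lam))
      - ((I + 1) / N - 1 / (8 * Real.pi)) * lam ^ 2 := by
  have hpi := Real.pi_pos
  set γ : ℝ := 8 * Real.pi * T / lam ^ 2 with hγdef
  have hγ : 0 < γ := by positivity
  have h := hbound γ hγ
  have hlog : γ * lam / N = 8 * Real.pi * T / (N * lam) := by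
    rw [hγdef]; field_simp
  rw [hlog] at h
  set L := Real.log (8 * Real.pi * T / (N * lam)) with hL
  have hγval : γ * lam ^ 2 = 8 * Real.pi * T := by
    rw [hγdef]; field_simp
  have hNe : N ≠ 0 := ne_of_gt hN
  have hpine : Real.pi ≠ 0 := ne_of_gt hpi
  have hlamne : lam ≠ 0 := ne_of_gt hlam
  -- h : T + (γ/2)*V ≥ (γ*lam^2/(16π)) * (1 + 8π(1+I)/N - 2L)
  have h2 : T + (γ / 2) * V ≥ (T / 2) * (1 + 8 * Real.pi * (1 + I) / N - 2 * L) := by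
    have : γ * lam ^ 2 / (16 * Real.pi) = T / 2 := by
      rw [hγval]; field_simp; ring
    rwa [this] at h
  -- divide by γ/2 > 0
  have hkey : V ≥ (lam ^ 2 / (4 * Real.pi)) *
      ((1 + 8 * Real.pi * (1 + I) / N - 2 * L) / 2 - 1) := by
    have hγ2 : 0 < γ / 2 := by linarith
    have h3 : (γ / 2) * V ≥ (T / 2) * (1 + 8 * Real.pi * (1 + I) / N - 2 * L) - T := by
      linarith
    have hTγ : T = γ * lam ^ 2 / (8 * Real.pi) := by
      rw [hγval]; field_simp
    rw [hTγ] at h3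
    have h4 : V ≥ ((γ * lam ^ 2 / (8 * Real.pi)) / 2 * (1 + 8 * Real.pi * (1 + I) / N - 2 * L)
        - γ * lam ^ 2 / (8 * Real.pi)) / (γ / 2) := by
      rw [ge_iff_le, div_le_iff₀ hγ2]
      linarith [h3]
    refine le_trans (le_of_eq ?_) h4
    field_simp
    ring
  have expand : (lam ^ 2 / (4 * Real.pi)) *
      ((1 + 8 * Real.pi * (1 + I) / N - 2 * L) / 2 - 1)
      = -((lam ^ 2 / (4 * Real.pi)) * L - ((I + 1) / N - 1 / (8 * Real.pi)) * lam ^ 2) := by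
    field_simp
    ring
  linarith [hkey, le_of_eq expand]
end
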